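/- With notation as in the rating model (e_{ijk} > 0; μ^x_i, M^x_i the min and max of e_{ijk} over (j,k); μ^y_1, M^y_j defined analogously; all l's nonnegative with l^x_1, l^y_1 > 0), for every point (x,y,z) in the invariant box U defined by the bounds (l^y_j μ^y_1)/(l^y_1 M^y_j) ≤ y_j, one has |∂φ_i/∂y_j| ≤ (l^x_i/l^x_1) · (M^x_1 M^x_i − μ^x_1 μ^x_i)/(μ^x_i)^2 · l^y_1 / (μ^y_1 ∑_{j'} l^y_{j'}/M^y_{j'}). -/

import Mathlib

lemma rmb_sum_update {n : ℕ} (g y : Fin n → ℝ) (j : Fin n) (t : ℝ) :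
    ∑ j', g j' * Function.update y j t j'
      = g j * t + ∑ j' ∈ Finset.univ.erase j, g j' * y j' := by
  rw [← Finset.add_sum_erase _ _ (Finset.mem_univ j)]
  congr 1
  · rw [Function.update_self]
  · exact Finset.sum_congr rfl fun j' hj' => by
      rw [Function.update_of_ne (Finset.ne_of_mem_erase hj')]

theorem rating_map_partial_derivative_bound (m n p : ℕ)
    (hm : 0 < m) (hn : 0 < n) (hp : 0 < p)
    (e : Fin m → Fin n → Fin p → ℝ) (he : ∀ i j k, 0 < e i j k)
    (lx : Fin m → ℝ) (ly : Fin n → ℝ)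
    (hlx : ∀ i, 0 ≤ lx i) (hly : ∀ j, 0 ≤ ly j)
    (hlx1 : 0 < lx ⟨0, hm⟩) (hly1 : 0 < ly ⟨0, hn⟩)
    (μx Mx : Fin m → ℝ) (μy My : Fin n → ℝ)
    (hμx : ∀ i, μx i = Finset.univ.inf'
      (Finset.univ_nonempty_iff.mpr ⟨(⟨0, hn⟩, ⟨0, hp⟩)⟩)
      (fun jk : Fin n × Fin p => e i jk.1 jk.2))
    (hMx : ∀ i, Mx i = Finset.univ.sup'
      (Finset.univ_nonempty_iff.mpr ⟨(⟨0, hn⟩, ⟨0, hp⟩)⟩)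
      (fun jk : Fin n × Fin p => e i jk.1 jk.2))
    (hμy : ∀ j, μy j = Finset.univ.inf'
      (Finset.univ_nonempty_iff.mpr ⟨(⟨0, hm⟩, ⟨0, hp⟩)⟩)
      (fun ik : Fin m × Fin p => e ik.1 j ik.2))
    (hMy : ∀ j, My j = Finset.univ.sup'
      (Finset.univ_nonempty_iff.mpr ⟨(⟨0, hm⟩, ⟨0, hp⟩)⟩)
      (fun ik : Fin m × Fin p => e ik.1 j ik.2))
    (y : Fin n → ℝ) (z : Fin p → ℝ)
    (hy : ∀ j', 0 < y j') (hz : ∀ k, 0 < z k)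
    (hybox : ∀ j', ly j' * μy ⟨0, hn⟩ / (ly ⟨0, hn⟩ * My j') ≤ y j')
    (i : Fin m) (j : Fin n) :
    |deriv (fun t : ℝ => lx i / lx ⟨0, hm⟩ *
        ((∑ j', ∑ k, e ⟨0, hm⟩ j' k * Function.update y j t j' * z k) /
          (∑ j', ∑ k, e i j' k * Function.update y j t j' * z k))) (y j)|
      ≤ lx i / lx ⟨0, hm⟩ *
          ((Mx ⟨0, hm⟩ * Mx i - μx ⟨0, hm⟩ * μx i) / (μx i) ^ 2) *
          (ly ⟨0, hn⟩ / (μy ⟨0, hn⟩ * ∑ j', ly j' / My j')) := by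
  set i1 : Fin m := ⟨0, hm⟩ with hi1
  set j1 : Fin n := ⟨0, hn⟩ with hj1
  set k1 : Fin p := ⟨0, hp⟩ with hk1
  -- positivity facts
  have hμxpos : ∀ i', 0 < μx i' := fun i' => by
    rw [hμx i', Finset.lt_inf'_iff]; exact fun b _ => he _ _ _
  have hμypos : 0 < μy j1 := by
    rw [hμy j1, Finset.lt_inf'_iff]; exact fun b _ => he _ _ _
  have hMypos : ∀ j', 0 < My j' := fun j' => by
    rw [hMy j']
    exact lt_of_lt_of_le (he i1 j' k1) (Finset.le_sup' (fun ik : Fin m × Fin p => e ik.1 j' ik.2) (Finset.mem_univ (i1, k1)))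
  have hμxle : ∀ i' j' k, μx i' ≤ e i' j' k := fun i' j' k => by
    rw [hμx i']; exact Finset.inf'_le (fun jk : Fin n × Fin p => e i' jk.1 jk.2) (Finset.mem_univ (j', k))
  have hMxge : ∀ i' j' k, e i' j' k ≤ Mx i' := fun i' j' k => by
    rw [hMx i']; exact Finset.le_sup' (fun jk : Fin n × Fin p => e i' jk.1 jk.2) (Finset.mem_univ (j', k))
  have hSy : 0 < ∑ j', y j' := Finset.sum_pos (fun j' _ => hy j') ⟨j1, Finset.mem_univ _⟩
  have hSz : 0 < ∑ k, z k := Finset.sum_pos (fun k _ => hz k) ⟨k1, Finset.mem_univ _⟩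
  have hSig : 0 < ∑ j', ly j' / My j' := by
    refine Finset.sum_pos' (fun j' _ => div_nonneg (hly j') (hMypos j').le)
      ⟨j1, Finset.mem_univ _, div_pos hly1 (hMypos j1)⟩
  have hc : 0 ≤ lx i / lx i1 := div_nonneg (hlx i) hlx1.le
  -- affine form of numerator and denominator
  have hNt : ∀ (i' : Fin m) (t : ℝ),
      (∑ j', ∑ k, e i' j' k * Function.update y j t j' * z k)
        = (∑ k, e i' j k * z k) * t
            + ∑ j' ∈ Finset.univ.erase j, (∑ k, e i' j' k * z k) * y j' := by
    intro i' t
    rw [← rmb_sum_update (fun j' => ∑ k, e i' j' k * z k) y j t]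
    refine Finset.sum_congr rfl fun j' _ => ?_
    rw [Finset.sum_mul]
    exact Finset.sum_congr rfl fun k _ => by ring
  have hN0 : (∑ k, e i1 j k * z k) * y j
        + ∑ j' ∈ Finset.univ.erase j, (∑ k, e i1 j' k * z k) * y j'
      = ∑ j', ∑ k, e i1 j' k * y j' * z k := by
    rw [← hNt i1 (y j)]
    simp [Function.update_eq_self]
  have hD0 : (∑ k, e i j k * z k) * y j
        + ∑ j' ∈ Finset.univ.erase j, (∑ k, e i j' k * z k) * y j'
      = ∑ j', ∑ k, e i j' k * y j' * z k := by
    rw [← hNt i (y j)]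
    simp [Function.update_eq_self]
  have hD0pos : 0 < ∑ j', ∑ k, e i j' k * y j' * z k :=
    Finset.sum_pos (fun j' _ => Finset.sum_pos
      (fun k _ => mul_pos (mul_pos (he i j' k) (hy j')) (hz k)) ⟨k1, Finset.mem_univ _⟩)
      ⟨j1, Finset.mem_univ _⟩
  have hDne : (∑ k, e i j k * z k) * y j
        + ∑ j' ∈ Finset.univ.erase j, (∑ k, e i j' k * z k) * y j' ≠ 0 := by
    rw [hD0]; exact ne_of_gt hD0pos
  have hfeq : (fun t : ℝ => lx i / lx i1 *
        ((∑ j', ∑ k, e i1 j' k * Function.update y j t j' * z k) /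
          (∑ j', ∑ k, e i j' k * Function.update y j t j' * z k)))
      = fun t : ℝ => lx i / lx i1 *
        (((∑ k, e i1 j k * z k) * t
            + ∑ j' ∈ Finset.univ.erase j, (∑ k, e i1 j' k * z k) * y j') /
          ((∑ k, e i j k * z k) * t
            + ∑ j' ∈ Finset.univ.erase j, (∑ k, e i j' k * z k) * y j')) := by
    funext t; rw [hNt i1 t, hNt i t]
  have hN' : HasDerivAt (fun t : ℝ => (∑ k, e i1 j k * z k) * t
      + ∑ j' ∈ Finset.univ.erase j, (∑ k, e i1 j' k * z k) * y j')
      (∑ k, e i1 j k * z k) (y j) := by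
    simpa using ((hasDerivAt_id (y j)).const_mul (∑ k, e i1 j k * z k)).add_const
      (∑ j' ∈ Finset.univ.erase j, (∑ k, e i1 j' k * z k) * y j')
  have hD' : HasDerivAt (fun t : ℝ => (∑ k, e i j k * z k) * t
      + ∑ j' ∈ Finset.univ.erase j, (∑ k, e i j' k * z k) * y j')
      (∑ k, e i j k * z k) (y j) := by
    simpa using ((hasDerivAt_id (y j)).const_mul (∑ k, e i j k * z k)).add_const
      (∑ j' ∈ Finset.univ.erase j, (∑ k, e i j' k * z k) * y j')
  have hq := (hN'.div hD' hDne).const_mul (lx i / lx i1)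
  simp only [Pi.div_apply] at hq
  rw [hfeq, hq.deriv]
  simp only [hN0, hD0]
  -- abbreviations
  set A := ∑ k, e i1 j k * z k with hAd
  set C := ∑ k, e i j k * z k with hCd
  set N0 := ∑ j', ∑ k, e i1 j' k * y j' * z k with hN0d
  set D0 := ∑ j', ∑ k, e i j' k * y j' * z k with hD0d
  set S := ∑ j', y j' with hSd
  set T := ∑ k, z k with hTd
  set Sig := ∑ j', ly j' / My j' with hSigd
  set K := Mx i1 * Mx i - μx i1 * μx i with hKd
  have hK : 0 ≤ K := by
    have h1 := (hμxle i1 j1 k1).trans (hMxge i1 j1 k1)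
    have h2 := (hμxle i j1 k1).trans (hMxge i j1 k1)
    nlinarith [hμxpos i, hμxpos i1]
  -- expansion of the numerator
  have h1 : A * D0 = ∑ k, ∑ j', ∑ k', (e i1 j k * z k) * (e i j' k' * y j' * z k') := by
    rw [hAd, hD0d, Finset.sum_mul]
    refine Finset.sum_congr rfl fun k _ => ?_
    rw [Finset.mul_sum]
    refine Finset.sum_congr rfl fun j' _ => ?_
    rw [Finset.mul_sum]
  have h2 : N0 * C = ∑ k, ∑ j', ∑ k', (e i j k * z k) * (e i1 j' k' * y j' * z k') := by
    rw [hCd, hN0d, mul_comm, Finset.sum_mul]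
    refine Finset.sum_congr rfl fun k _ => ?_
    rw [Finset.mul_sum]
    refine Finset.sum_congr rfl fun j' _ => ?_
    rw [Finset.mul_sum]
  have hexp : A * D0 - N0 * C
      = ∑ k, ∑ j', ∑ k', ((e i1 j k * e i j' k' - e i j k * e i1 j' k')
          * (z k * (y j' * z k'))) := by
    rw [h1, h2]
    simp only [← Finset.sum_sub_distrib]
    exact Finset.sum_congr rfl fun k _ => Finset.sum_congr rfl fun j' _ =>
      Finset.sum_congr rfl fun k' _ => by ring
  have hsum3 : (∑ k, ∑ j', ∑ k', K * (z k * (y j' * z k'))) = K * (T * (S * T)) := by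
    rw [hTd, hSd]
    simp only [Finset.mul_sum, Finset.sum_mul]
    exact Finset.sum_congr rfl fun k _ => Finset.sum_congr rfl fun j' _ =>
      Finset.sum_congr rfl fun k' _ => by ring
  have hnum : |A * D0 - N0 * C| ≤ K * (T * (S * T)) := by
    rw [hexp, ← hsum3]
    refine (Finset.abs_sum_le_sum_abs _ _).trans (Finset.sum_le_sum fun k _ => ?_)
    refine (Finset.abs_sum_le_sum_abs _ _).trans (Finset.sum_le_sum fun j' _ => ?_)
    refine (Finset.abs_sum_le_sum_abs _ _).trans (Finset.sum_le_sum fun k' _ => ?_)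
    have hzz : (0:ℝ) < z k * (y j' * z k') := mul_pos (hz k) (mul_pos (hy j') (hz k'))
    rw [abs_mul, abs_of_pos hzz]
    refine mul_le_mul_of_nonneg_right ?_ hzz.le
    rw [abs_le, hKd]
    have hub1 : e i1 j k * e i j' k' ≤ Mx i1 * Mx i :=
      mul_le_mul (hMxge i1 j k) (hMxge i j' k') (he i j' k').le
        ((he i1 j k).le.trans (hMxge i1 j k))
    have hub2 : e i j k * e i1 j' k' ≤ Mx i1 * Mx i := by
      rw [mul_comm (Mx i1) (Mx i)]
      exact mul_le_mul (hMxge i j k) (hMxge i1 j' k') (he i1 j' k').le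
        ((he i j k).le.trans (hMxge i j k))
    have hlb1 : μx i1 * μx i ≤ e i1 j k * e i j' k' :=
      mul_le_mul (hμxle i1 j k) (hμxle i j' k') (hμxpos i).le (he i1 j k).le
    have hlb2 : μx i1 * μx i ≤ e i j k * e i1 j' k' := by
      rw [mul_comm (μx i1) (μx i)]
      exact mul_le_mul (hμxle i j k) (hμxle i1 j' k') (hμxpos i1).le (he i j k).le
    constructor <;> linarith
  -- lower bound on the denominator
  have hDlow : μx i * (S * T) ≤ D0 := by
    rw [hD0d, hSd, hTd]
    have heq : μx i * ((∑ j', y j') * (∑ k, z k)) = ∑ j', ∑ k, μx i * y j' * z k := by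
      rw [Finset.sum_mul_sum, Finset.mul_sum]
      refine Finset.sum_congr rfl fun j' _ => ?_
      rw [Finset.mul_sum]
      exact Finset.sum_congr rfl fun k _ => by ring
    rw [heq]
    refine Finset.sum_le_sum fun j' _ => Finset.sum_le_sum fun k _ => ?_
    exact mul_le_mul_of_nonneg_right
      (mul_le_mul_of_nonneg_right (hμxle i j' k) (hy j').le) (hz k).le
  have hDlow2 : (μx i * (S * T)) ^ 2 ≤ D0 ^ 2 :=
    pow_le_pow_left₀ (mul_nonneg (hμxpos i).le (mul_nonneg hSy.le hSz.le)) hDlow 2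
  -- S lower bound from the box
  have hSlow : μy j1 * Sig ≤ ly j1 * S := by
    rw [hSigd, hSd, Finset.mul_sum, Finset.mul_sum]
    refine Finset.sum_le_sum fun j' _ => ?_
    have hb := hybox j'
    rw [div_le_iff₀ (mul_pos hly1 (hMypos j'))] at hb
    have h3 : μy j1 * (ly j' / My j') = μy j1 * ly j' / My j' := by ring
    rw [h3, div_le_iff₀ (hMypos j')]
    nlinarith [hb]
  -- assemble
  calc |lx i / lx i1 * ((A * D0 - N0 * C) / D0 ^ 2)|
      = lx i / lx i1 * (|A * D0 - N0 * C| / D0 ^ 2) := by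
        rw [abs_mul, abs_of_nonneg hc, abs_div, abs_of_pos (pow_pos hD0pos 2)]
    _ ≤ lx i / lx i1 * ((K * (T * (S * T))) / (μx i * (S * T)) ^ 2) := by
        refine mul_le_mul_of_nonneg_left ?_ hc
        exact div_le_div₀ (mul_nonneg hK (mul_nonneg hSz.le (mul_nonneg hSy.le hSz.le)))
          hnum (pow_pos (mul_pos (hμxpos i) (mul_pos hSy hSz)) 2) hDlow2
    _ = lx i / lx i1 * (K / μx i ^ 2 * (1 / S)) := by
        congr 1
        have hμ := hμxpos i
        field_simp
    _ ≤ lx i / lx i1 * (K / μx i ^ 2 * (ly j1 / (μy j1 * Sig))) := by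
        refine mul_le_mul_of_nonneg_left ?_ hc
        refine mul_le_mul_of_nonneg_left ?_ (div_nonneg hK (pow_pos (hμxpos i) 2).le)
        rw [div_le_div_iff₀ hSy (mul_pos hμypos hSig), one_mul]
        linarith [hSlow]
    _ = lx i / lx i1 * (K / μx i ^ 2) * (ly j1 / (μy j1 * Sig)) := by ring
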